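/- Let φ(t) = (t−1)³/t² and ψ_k(t) = φ(t)^k · (t−1)(t−4)/t for k ≥ 1. Then the map ξ = (φ, ψ₁) : ℂ* → ℂ² is injective; moreover φ'(t) = (t−1)²(t+2)/t³ and ψ₁' share the common zero t = −2, where the curve has an A₂ cusp, and t = 1 is a singular point with φ ~ (t−1)³. -/

import Mathlib

/-- First coordinate of series (k): `φ(t) = (t−1)³/t²`. -/
noncomputable def phiK : ℂ → ℂ := fun t => (t - 1) ^ 3 / t ^ 2

/-- Second coordinate for `k = 1`: `ψ₁(t) = φ(t)·(t−1)(t−4)/t`. -/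
noncomputable def psiK : ℂ → ℂ := fun t => phiK t * ((t - 1) * (t - 4) / t)

lemma hasDerivAt_phiK (t : ℂ) (ht : t ≠ 0) :
    HasDerivAt phiK ((t - 1) ^ 2 * (t + 2) / t ^ 3) t := by
  have h1 : HasDerivAt (fun t : ℂ => (t - 1) ^ 3) (3 * (t - 1) ^ 2 * 1) t := by
    exact (((hasDerivAt_id t).sub_const 1).pow 3)
  have h2 : HasDerivAt (fun t : ℂ => t ^ 2) (2 * t ^ 1) t := hasDerivAt_pow 2 t
  have := h1.fun_div h2 (pow_ne_zero 2 ht)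
  refine this.congr_deriv ?_
  field_simp
  ring

lemma hasDerivAt_psiK (t : ℂ) (ht : t ≠ 0) :
    HasDerivAt psiK ((t - 1) ^ 2 * (t + 2) / t ^ 3 * ((t - 1) * (t - 4) / t)
      + (t - 1) ^ 3 / t ^ 2 * ((t ^ 2 - 4) / t ^ 2)) t := by
  have hg : HasDerivAt (fun t : ℂ => (t - 1) * (t - 4) / t) ((t ^ 2 - 4) / t ^ 2) t := by
    have h1 : HasDerivAt (fun t : ℂ => (t - 1) * (t - 4)) (1 * (t - 4) + (t - 1) * 1) t :=
      (((hasDerivAt_id t).sub_const 1).mul ((hasDerivAt_id t).sub_const 4))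
    have h2 : HasDerivAt (fun t : ℂ => t) 1 t := hasDerivAt_id t
    have := h1.fun_div h2 ht
    refine this.congr_deriv ?_
    field_simp
    ring
  exact (hasDerivAt_phiK t ht).mul hg

lemma deriv_phiK (t : ℂ) (ht : t ≠ 0) :
    deriv phiK t = (t - 1) ^ 2 * (t + 2) / t ^ 3 :=
  (hasDerivAt_phiK t ht).deriv

lemma deriv_phiK_eventually {t : ℂ} (ht : t ≠ 0) :
    deriv phiK =ᶠ[nhds t] fun s => (s - 1) ^ 2 * (s + 2) / s ^ 3 := by
  filter_upwards [eventually_ne_nhds ht] with s hs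
  exact deriv_phiK s hs

lemma deriv2_phiK (t : ℂ) (ht : t ≠ 0) :
    deriv (deriv phiK) t = 6 * (t - 1) / t ^ 4 := by
  rw [(deriv_phiK_eventually ht).deriv_eq]
  have h1 : HasDerivAt (fun s : ℂ => (s - 1) ^ 2 * (s + 2))
      (2 * (t - 1) ^ 1 * 1 * (t + 2) + (t - 1) ^ 2 * 1) t :=
    (((hasDerivAt_id t).sub_const 1).pow 2).mul ((hasDerivAt_id t).add_const 2)
  have h2 : HasDerivAt (fun s : ℂ => s ^ 3) (3 * t ^ 2) t := by
    simpa using hasDerivAt_pow 3 t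
  have := (h1.fun_div h2 (pow_ne_zero 3 ht)).deriv
  rw [this]
  field_simp
  ring

lemma deriv2_phiK_eventually {t : ℂ} (ht : t ≠ 0) :
    deriv (deriv phiK) =ᶠ[nhds t] fun s => 6 * (s - 1) / s ^ 4 := by
  filter_upwards [eventually_ne_nhds ht] with s hs
  exact deriv2_phiK s hs

/-- series (k), `k = 1`: the map `ξ = (φ, ψ₁)` is injective on `ℂ*`;
moreover `φ'(t) = (t−1)²(t+2)/t³`, the common zero `t = −2` of `φ'` and `ψ₁'` is an
A₂ cusp (`φ''(−2) ≠ 0`), and `t = 1` is a singular point where `φ` vanishes to order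
exactly 3. -/
theorem series_k_seed :
    Set.InjOn (fun t : ℂ => (phiK t, psiK t)) {t : ℂ | t ≠ 0} ∧
    (∀ t : ℂ, t ≠ 0 → deriv phiK t = (t - 1) ^ 2 * (t + 2) / t ^ 3) ∧
    deriv phiK (-2) = 0 ∧ deriv psiK (-2) = 0 ∧ iteratedDeriv 2 phiK (-2) ≠ 0 ∧
    deriv phiK 1 = 0 ∧ deriv psiK 1 = 0 ∧
    iteratedDeriv 2 phiK 1 = 0 ∧ iteratedDeriv 3 phiK 1 ≠ 0 := by
  have h2 : (2 : ℂ) ≠ 0 := two_ne_zero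
  have hm2 : (-2 : ℂ) ≠ 0 := by norm_num
  have h1 : (1 : ℂ) ≠ 0 := one_ne_zero
  refine ⟨?_, deriv_phiK, ?_, ?_, ?_, ?_, ?_, ?_, ?_⟩
  · -- injectivity
    intro a ha b hb hab
    simp only [Set.mem_setOf_eq] at ha hb
    simp only [Prod.mk.injEq] at hab
    obtain ⟨hφ, hψ⟩ := hab
    simp only [phiK, psiK] at hφ hψ
    have hE1 : (a - 1) ^ 3 * b ^ 2 = (b - 1) ^ 3 * a ^ 2 := by
      field_simp at hφ
      linear_combination hφ
    by_cases ha1 : a = 1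
    · subst ha1
      have : (b - 1) ^ 3 = 0 := by linear_combination -hE1
      have hb1 : b = 1 := by
        have := pow_eq_zero_iff (n := 3) (by norm_num) |>.mp this
        linear_combination this
      simp [hb1]
    · have hb1 : b ≠ 1 := by
        intro hb1
        subst hb1
        apply ha1
        have : (a - 1) ^ 3 = 0 := by
          have h0 : (a - 1) ^ 3 * 1 ^ 2 = 0 := by rw [hE1]; ring
          simpa using h0
        have := pow_eq_zero_iff (n := 3) (by norm_num) |>.mp this
        linear_combination this
      -- φ(a) ≠ 0, so we can cancel it in the ψ equation to get g(a) = g(b)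
      have hφa : (a - 1) ^ 3 / a ^ 2 ≠ 0 :=
        div_ne_zero (pow_ne_zero 3 (sub_ne_zero.mpr ha1)) (pow_ne_zero 2 ha)
      have hg : (a - 1) * (a - 4) / a = (b - 1) * (b - 4) / b := by
        rw [hφ] at hψ
        exact mul_left_cancel₀ (hφ ▸ hφa) hψ
      have hE2 : (a - 1) * (a - 4) * b = (b - 1) * (b - 4) * a := by
        field_simp at hg
        linear_combination hg
      have key : (a - b) * (a * b - 4) = 0 := by linear_combination hE2
      rcases mul_eq_zero.mp key with h | h
      · exact sub_eq_zero.mp h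
      · have hab4 : a * b = 4 := by linear_combination h
        have hfac : (a + 2) ^ 3 * (a - 2) = 0 := by
          linear_combination a ^ 2 * hE1 +
            (a ^ 3 * b ^ 2 - (a ^ 4 - a ^ 2 - a) * b - a ^ 3 + 4 * a + 4) * h
        rcases mul_eq_zero.mp hfac with h' | h'
        · have ha2 : a = -2 := by
            have := pow_eq_zero_iff (n := 3) (by norm_num) |>.mp h'
            linear_combination this
          have hb2 : b = -2 := by
            rw [ha2] at hab4
            linear_combination -hab4 / 2
          rw [ha2, hb2]
        · have ha2 : a = 2 := by linear_combination h'
          have hb2 : b = 2 := by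
            rw [ha2] at hab4
            linear_combination hab4 / 2
          rw [ha2, hb2]
  · rw [deriv_phiK (-2) hm2]; norm_num
  · rw [(hasDerivAt_psiK (-2) hm2).deriv]; norm_num
  · rw [iteratedDeriv_succ, iteratedDeriv_one, deriv2_phiK (-2) hm2]
    norm_num
  · rw [deriv_phiK 1 h1]; norm_num
  · rw [(hasDerivAt_psiK 1 h1).deriv]; norm_num
  · rw [iteratedDeriv_succ, iteratedDeriv_one, deriv2_phiK 1 h1]
    norm_num
  · rw [iteratedDeriv_succ, iteratedDeriv_succ, iteratedDeriv_one,
      (deriv2_phiK_eventually h1).deriv_eq]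
    have hd : HasDerivAt (fun s : ℂ => 6 * (s - 1) / s ^ 4) 6 1 := by
      have ha : HasDerivAt (fun s : ℂ => 6 * (s - 1)) 6 (1 : ℂ) := by
        simpa using ((hasDerivAt_id (1:ℂ)).sub_const 1).const_mul 6
      have hb : HasDerivAt (fun s : ℂ => s ^ 4) (4 * (1:ℂ) ^ 3) 1 := hasDerivAt_pow 4 1
      have := ha.fun_div hb (by norm_num)
      exact this.congr_deriv (by norm_num)
    rw [hd.deriv]
    norm_num
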